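/- For all w, w̃ ∈ ℝ^d and all symmetric positive semidefinite d × d matrices A, Ã: sup over φ ∈ ℝ^d with ‖φ‖ ≤ 1 of |(wᵀφ + √(φᵀAφ)) − (w̃ᵀφ + √(φᵀÃφ))| ≤ ‖w − w̃‖ + √(‖A − Ã‖_F), where ‖·‖_F denotes the Frobenius norm. -/

import Mathlib

open Matrix

/-- The Frobenius norm of a real `d × d` matrix. -/
noncomputable def frobeniusNorm {d : ℕ} (A : Matrix (Fin d) (Fin d) ℝ) : ℝ :=
  Real.sqrt (∑ i, ∑ j, (A i j) ^ 2)

lemma my_sqrt_add_le (x y : ℝ) (hx : 0 ≤ x) (hy : 0 ≤ y) :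
    Real.sqrt (x + y) ≤ Real.sqrt x + Real.sqrt y := by
  have h : x + y ≤ (Real.sqrt x + Real.sqrt y) ^ 2 := by
    nlinarith [Real.sq_sqrt hx, Real.sq_sqrt hy, Real.sqrt_nonneg x, Real.sqrt_nonneg y]
  calc Real.sqrt (x + y) ≤ Real.sqrt ((Real.sqrt x + Real.sqrt y) ^ 2) := Real.sqrt_le_sqrt h
    _ = _ := Real.sqrt_sq (by positivity)

lemma my_sqrt_sub_le (a b : ℝ) (hb : 0 ≤ b) :
    Real.sqrt a - Real.sqrt b ≤ Real.sqrt |a - b| := by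
  rcases le_total a b with h | h
  · have : Real.sqrt a ≤ Real.sqrt b := Real.sqrt_le_sqrt h
    have := Real.sqrt_nonneg |a - b|
    linarith
  · have ha' : Real.sqrt a ≤ Real.sqrt b + Real.sqrt (a - b) := by
      calc Real.sqrt a = Real.sqrt (b + (a - b)) := by ring_nf
        _ ≤ _ := my_sqrt_add_le _ _ hb (by linarith)
    rw [abs_of_nonneg (by linarith)]
    linarith

lemma my_abs_sqrt_sub (a b : ℝ) (ha : 0 ≤ a) (hb : 0 ≤ b) :
    |Real.sqrt a - Real.sqrt b| ≤ Real.sqrt |a - b| := by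
  rw [abs_sub_le_iff]
  exact ⟨my_sqrt_sub_le a b hb, by rw [abs_sub_comm]; exact my_sqrt_sub_le b a ha⟩

lemma my_abs_sum_mul_le {ι : Type*} [Fintype ι] (f g : ι → ℝ) :
    |∑ i, f i * g i| ≤ Real.sqrt (∑ i, f i ^ 2) * Real.sqrt (∑ i, g i ^ 2) := by
  rw [← Real.sqrt_sq_eq_abs, ← Real.sqrt_mul (by positivity)]
  exact Real.sqrt_le_sqrt (Finset.sum_mul_sq_le_sq_mul_sq _ _ _)

/-- Lipschitz-in-parameters estimate for `f^{w,A}(φ) = wᵀφ + √(φᵀAφ)`: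
for all `w, w̃` and symmetric positive semidefinite `A, Ã`,
`sup_{‖φ‖≤1} |(wᵀφ + √(φᵀAφ)) − (w̃ᵀφ + √(φᵀÃφ))| ≤ ‖w − w̃‖ + √(‖A − Ã‖_F)`. -/
theorem stmt_12 (d : ℕ) (hd : 1 ≤ d)
    (w wt : EuclideanSpace ℝ (Fin d))
    (A At : Matrix (Fin d) (Fin d) ℝ)
    (hA : A.PosSemidef) (hAt : At.PosSemidef) :
    ∀ φ : EuclideanSpace ℝ (Fin d), ‖φ‖ ≤ 1 →
      |(w ⬝ᵥ φ + Real.sqrt (φ ⬝ᵥ A.mulVec φ)) -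
          (wt ⬝ᵥ φ + Real.sqrt (φ ⬝ᵥ At.mulVec φ))| ≤
        ‖w - wt‖ + Real.sqrt (frobeniusNorm (A - At)) := by
  intro φ hφ
  set a := φ ⬝ᵥ A.mulVec φ with ha_def
  set b := φ ⬝ᵥ At.mulVec φ with hb_def
  have ha : 0 ≤ a := by simpa using hA.dotProduct_mulVec_nonneg φ
  have hb : 0 ≤ b := by simpa using hAt.dotProduct_mulVec_nonneg φ
  have hsum : ∑ i, φ i ^ 2 ≤ 1 := by
    have h1 : Real.sqrt (∑ i, φ i ^ 2) = ‖φ‖ := by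
      rw [EuclideanSpace.norm_eq]
      congr 1; apply Finset.sum_congr rfl; intro i _
      rw [Real.norm_eq_abs, sq_abs]
    have h2 : ∑ i, φ i ^ 2 = ‖φ‖ ^ 2 := by
      rw [← h1, Real.sq_sqrt (by positivity)]
    rw [h2]
    nlinarith [norm_nonneg φ]
  have hsumnn : (0:ℝ) ≤ ∑ i, φ i ^ 2 := by positivity
  -- linear part
  have hlin : |w ⬝ᵥ φ - wt ⬝ᵥ φ| ≤ ‖w - wt‖ := by
    have h1 : w ⬝ᵥ φ - wt ⬝ᵥ φ = ∑ i, (w i - wt i) * φ i := by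
      simp [dotProduct, ← Finset.sum_sub_distrib, sub_mul]
    have h2 : ‖w - wt‖ = Real.sqrt (∑ i, (w i - wt i) ^ 2) := by
      rw [EuclideanSpace.norm_eq]
      congr 1; apply Finset.sum_congr rfl; intro i _
      rw [Real.norm_eq_abs, sq_abs]; rfl
    rw [h1, h2]
    calc |∑ i, (w i - wt i) * φ i|
        ≤ Real.sqrt (∑ i, (w i - wt i) ^ 2) * Real.sqrt (∑ i, φ i ^ 2) :=
          my_abs_sum_mul_le _ _
      _ ≤ Real.sqrt (∑ i, (w i - wt i) ^ 2) * 1 := by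
          apply mul_le_mul_of_nonneg_left _ (Real.sqrt_nonneg _)
          calc Real.sqrt (∑ i, φ i ^ 2) ≤ Real.sqrt 1 := Real.sqrt_le_sqrt hsum
            _ = 1 := Real.sqrt_one
      _ = _ := mul_one _
  -- quadratic part
  have hquad : |a - b| ≤ frobeniusNorm (A - At) := by
    set M := A - At with hM
    have h1 : a - b = ∑ p : Fin d × Fin d, M p.1 p.2 * (φ p.1 * φ p.2) := by
      rw [ha_def, hb_def, Fintype.sum_prod_type]
      simp only [dotProduct, mulVec, dotProduct, hM, Matrix.sub_apply]
      rw [← Finset.sum_sub_distrib]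
      apply Finset.sum_congr rfl; intro i _
      rw [← mul_sub, ← Finset.sum_sub_distrib, Finset.mul_sum]
      apply Finset.sum_congr rfl; intro j _
      ring
    have h2 : ∑ p : Fin d × Fin d, M p.1 p.2 ^ 2 = ∑ i, ∑ j, M i j ^ 2 := by
      rw [Fintype.sum_prod_type]
    have h3 : ∑ p : Fin d × Fin d, (φ p.1 * φ p.2) ^ 2 = (∑ i, φ i ^ 2) ^ 2 := by
      rw [Fintype.sum_prod_type, sq, Finset.sum_mul]
      apply Finset.sum_congr rfl; intro i _
      rw [Finset.mul_sum]
      apply Finset.sum_congr rfl; intro j _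
      ring
    calc |a - b| = |∑ p : Fin d × Fin d, M p.1 p.2 * (φ p.1 * φ p.2)| := by rw [h1]
      _ ≤ Real.sqrt (∑ p : Fin d × Fin d, M p.1 p.2 ^ 2) *
            Real.sqrt (∑ p : Fin d × Fin d, (φ p.1 * φ p.2) ^ 2) := my_abs_sum_mul_le _ _
      _ = frobeniusNorm M * (∑ i, φ i ^ 2) := by
          rw [h2, h3, Real.sqrt_sq hsumnn]; rfl
      _ ≤ frobeniusNorm M * 1 := by
          gcongr
          exact Real.sqrt_nonneg _
      _ = frobeniusNorm M := mul_one _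
  have hs : |Real.sqrt a - Real.sqrt b| ≤ Real.sqrt (frobeniusNorm (A - At)) :=
    (my_abs_sqrt_sub a b ha hb).trans (by
      calc Real.sqrt |a - b| ≤ _ := Real.sqrt_le_sqrt hquad)
  calc |(w ⬝ᵥ φ + Real.sqrt a) - (wt ⬝ᵥ φ + Real.sqrt b)|
      = |(w ⬝ᵥ φ - wt ⬝ᵥ φ) + (Real.sqrt a - Real.sqrt b)| := by ring_nf
    _ ≤ |w ⬝ᵥ φ - wt ⬝ᵥ φ| + |Real.sqrt a - Real.sqrt b| := abs_add_le _ _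
    _ ≤ _ := add_le_add hlin hs
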